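/- Let α ≥ 1 and x₀, u₀ ∈ ℝ with u₀ ≠ 0, and let m ∈ [−3, −2) be the unique nonzero solution of (m+1)^{2α}(m+1) = (2α+1)m + 1 (m = −3 if α = 1), and set N = 2((α+1)m + 1)/(m+1). Then for all t ∈ (0, 1]: t · ((u₀t + x₀)^{2α}(u₀t + x₀) − x₀^{2α}x₀) / ((u₀ + x₀)^{2α}(u₀ + x₀) − x₀^{2α}x₀) ≥ t^N, whenever the denominator is nonzero. -/

import Mathlib

open Real Set

set_option linter.unusedVariables false


noncomputable def Fa (α z : ℝ) : ℝ := (z^2)^α * z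

lemma hasDerivAt_sq_rpow (α : ℝ) (hα : 1 ≤ α) (z : ℝ) :
    HasDerivAt (fun z : ℝ => (z^2)^α) (2*α*((z^2)^(α-1)*z)) z := by
  have h1 : HasDerivAt (fun z : ℝ => z^2) (2*z) z := by
    simpa using hasDerivAt_pow 2 z
  have := h1.rpow_const (p := α) (Or.inr hα)
  convert this using 1
  ring

lemma sq_rpow_key (α : ℝ) (hα : 1 ≤ α) (z : ℝ) : (z^2)^(α-1) * z^2 = (z^2)^α := by
  rcases eq_or_ne z 0 with rfl | hz
  · rw [show ((0:ℝ)^2 : ℝ) = 0 by norm_num]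
    rcases eq_or_ne α 1 with rfl | hα1
    · norm_num
    · rw [Real.zero_rpow (by linarith : α ≠ 0),
        Real.zero_rpow (by intro h; exact hα1 (by linarith [sub_eq_zero.mp h]))]
      ring
  · have hz2 : (0:ℝ) < z^2 := by positivity
    nth_rewrite 2 [← Real.rpow_one (z^2)]
    rw [← Real.rpow_add hz2]
    ring_nf

lemma hasDerivAt_Fa (α : ℝ) (hα : 1 ≤ α) (z : ℝ) :
    HasDerivAt (Fa α) ((2*α+1) * (z^2)^α) z := by
  have h1 := (hasDerivAt_sq_rpow α hα z).mul (hasDerivAt_id z)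
  convert h1 using 1
  · rfl
  · rfl
  · rfl
  simp only [id_eq]
  nlinarith [sq_rpow_key α hα z]

lemma Fa_odd (α z : ℝ) : Fa α (-z) = - Fa α z := by
  simp [Fa, neg_sq]

lemma Fa_mono (α : ℝ) (hα : 1 ≤ α) : Monotone (Fa α) := by
  have hd : ∀ z, HasDerivAt (Fa α) ((2*α+1) * (z^2)^α) z := hasDerivAt_Fa α hα
  have : Differentiable ℝ (Fa α) := fun z => (hd z).differentiableAt
  apply monotone_of_deriv_nonneg this
  intro z
  rw [(hd z).deriv]
  have : (0:ℝ) ≤ (z^2)^α := Real.rpow_nonneg (sq_nonneg z) α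
  nlinarith

lemma Fa_scale (α : ℝ) (s y : ℝ) (hs : 0 < s) :
    Fa α (s * y) = s ^ (2*α+1) * Fa α y := by
  unfold Fa
  have h1 : ((s*y)^2)^α = s^(2*α) * (y^2)^α := by
    rw [mul_pow, Real.mul_rpow (sq_nonneg s) (sq_nonneg y)]
    congr 1
    rw [← Real.rpow_natCast s 2, ← Real.rpow_mul hs.le]
    norm_num
  rw [h1]
  have h2 : s^(2*α+1) = s^(2*α) * s := by
    rw [Real.rpow_add hs, Real.rpow_one]
  rw [h2]; ring


lemma sq_rpow_pos {w : ℝ} (hw : 0 < w) (β : ℝ) : (w^2)^β = w^(2*β) := by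
  rw [← Real.rpow_natCast w 2, ← Real.rpow_mul hw.le]
  norm_num

noncomputable def Sa (α y : ℝ) : ℝ := y - ((y-1)^2)^α * y^(1-2*α)

lemma hasDerivAt_Sa (α : ℝ) (hα : 1 ≤ α) (y : ℝ) (hy : 0 < y) :
    HasDerivAt (Sa α)
      (1 - (2*α*(((y-1)^2)^(α-1)*(y-1)) * y^(1-2*α)
            + ((y-1)^2)^α * ((1-2*α) * y^(1-2*α-1)))) y := by
  have h1 : HasDerivAt (fun y : ℝ => ((y-1)^2)^α) (2*α*(((y-1)^2)^(α-1)*(y-1))) y := by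
    have hs : HasDerivAt (fun y : ℝ => y - 1) 1 y := (hasDerivAt_id y).sub_const 1
    have := (hasDerivAt_sq_rpow α hα (y-1)).comp y hs
    simpa [Function.comp_def] using this
  have h2 : HasDerivAt (fun y : ℝ => y^(1-2*α)) ((1-2*α) * y^(1-2*α-1)) y :=
    Real.hasDerivAt_rpow_const (Or.inl hy.ne')
  exact (hasDerivAt_id y).sub (h1.mul h2)

lemma Sa_deriv_nonneg (α : ℝ) (hα : 1 ≤ α) (y : ℝ) (hy : 0 < y) :
    0 ≤ 1 - (2*α*(((y-1)^2)^(α-1)*(y-1)) * y^(1-2*α)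
            + ((y-1)^2)^α * ((1-2*α) * y^(1-2*α-1))) := by
  have hyp : ∀ e : ℝ, 0 < y ^ e := fun e => Real.rpow_pos_of_pos hy e
  rcases le_or_gt y 1 with h1 | h1
  · have hA : (0:ℝ) ≤ ((y-1)^2)^(α-1) := Real.rpow_nonneg (sq_nonneg _) _
    have hC : (0:ℝ) ≤ ((y-1)^2)^α := Real.rpow_nonneg (sq_nonneg _) _
    have t1 : 2*α*(((y-1)^2)^(α-1)*(y-1)) * y^(1-2*α) ≤ 0 := by
      have : ((y-1)^2)^(α-1)*(y-1) ≤ 0 := mul_nonpos_of_nonneg_of_nonpos hA (by linarith)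
      have := mul_nonpos_of_nonneg_of_nonpos (by linarith : (0:ℝ) ≤ 2*α) this
      exact mul_nonpos_of_nonpos_of_nonneg this (hyp _).le
    have t2 : ((y-1)^2)^α * ((1-2*α) * y^(1-2*α-1)) ≤ 0 := by
      apply mul_nonpos_of_nonneg_of_nonpos hC
      exact mul_nonpos_of_nonpos_of_nonneg (by linarith) (hyp _).le
    linarith
  · set w := y - 1 with hw
    have hwpos : 0 < w := by simp [hw]; linarith
    -- rewrite powers of (w^2)^β as rpow of w
    have e1 : ((y-1)^2)^(α-1) = w^(2*α-2) := by
      rw [← hw, sq_rpow_pos hwpos]; ring_nf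
    have e2 : ((y-1)^2)^α = w^(2*α) := by rw [← hw, sq_rpow_pos hwpos]
    rw [e1, e2]
    -- key AM-GM: w^(2α-1) * (y + 2α - 1) ≤ y^(2α)
    have hv : (0:ℝ) < y + 2*α - 1 := by linarith
    have amgm : w^(2*α-1) * (y + 2*α - 1) ≤ y^(2*α) := by
      have hw1 : (0:ℝ) ≤ (2*α-1)/(2*α) := div_nonneg (by linarith) (by linarith)
      have hw2 : (0:ℝ) ≤ 1/(2*α) := by positivity
      have hsum : (2*α-1)/(2*α) + 1/(2*α) = 1 := by field_simp; ring
      have key := Real.geom_mean_le_arith_mean2_weighted hw1 hw2 hwpos.le hv.le hsum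
      have hrhs : (2*α-1)/(2*α) * w + 1/(2*α) * (y + 2*α - 1) = y := by
        field_simp; rw [hw]; ring
      rw [hrhs] at key
      have key2 := Real.rpow_le_rpow (by positivity) key (by positivity : (0:ℝ) ≤ 2*α)
      calc w^(2*α-1) * (y + 2*α - 1)
          = (w ^ ((2*α-1)/(2*α)) * (y + 2*α - 1) ^ (1/(2*α))) ^ (2*α) := by
            rw [Real.mul_rpow (Real.rpow_nonneg hwpos.le _) (Real.rpow_nonneg hv.le _),
              ← Real.rpow_mul hwpos.le, ← Real.rpow_mul hv.le]
            rw [show (2*α-1)/(2*α) * (2*α) = 2*α-1 by field_simp,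
              show 1/(2*α) * (2*α) = 1 by field_simp, Real.rpow_one]
        _ ≤ y ^ (2*α) := key2
    -- now reduce goal to amgm
    have eE : 2*α*(w^(2*α-2)*w) * y^(1-2*α) + w^(2*α) * ((1-2*α) * y^(1-2*α-1))
        = y^(-(2*α)) * (w^(2*α-1) * (y + 2*α - 1)) := by
      have f1 : w^(2*α-2)*w = w^(2*α-1) := by
        nth_rewrite 2 [← Real.rpow_one w]
        rw [← Real.rpow_add hwpos]; ring_nf
      have f2 : w^(2*α) = w^(2*α-1) * w := by
        nth_rewrite 3 [← Real.rpow_one w]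
        rw [← Real.rpow_add hwpos]; ring_nf
      have f3 : y^(1-2*α) = y^(-(2*α)) * y := by
        nth_rewrite 3 [← Real.rpow_one y]
        rw [← Real.rpow_add hy]; ring_nf
      have f4 : y^(1-2*α-1) = y^(-(2*α)) := by ring_nf
      rw [f1, f2, f3, f4]
      have : w = y - 1 := hw
      rw [this]; ring
    rw [show w = y - 1 from hw] at eE ⊢
    rw [eE]
    have final : y^(-(2*α)) * ((y-1)^(2*α-1) * (y + 2*α - 1)) ≤ 1 := by
      have h2 := mul_le_mul_of_nonneg_left amgm (hyp (-(2*α))).le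
      have : y^(-(2*α)) * y^(2*α) = 1 := by
        rw [← Real.rpow_add hy]; norm_num
      calc y^(-(2*α)) * ((y-1)^(2*α-1) * (y + 2*α - 1)) ≤ y^(-(2*α)) * y^(2*α) := h2
        _ = 1 := this
    linarith

noncomputable def Ga (α c y : ℝ) : ℝ := c^(2*α) * (Fa α y - Fa α (y-1)) - (2*α+1) * (y^2)^α
noncomputable def Da (α c y : ℝ) : ℝ :=
  c^(2*α) * ((y^2)^α - ((y-1)^2)^α) - 2*α*((y^2)^(α-1)*y)

lemma Sa_mono (α : ℝ) (hα : 1 ≤ α) : MonotoneOn (Sa α) (Ici (1/2 : ℝ)) := by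
  have hd : ∀ y ∈ Ici (1/2:ℝ), 0 < y := fun y hy => lt_of_lt_of_le (by norm_num) hy
  apply monotoneOn_of_deriv_nonneg (convex_Ici _)
  · intro y hy
    exact ((hasDerivAt_Sa α hα y (by have := hy; simp at this; linarith)).continuousAt).continuousWithinAt
  · intro y hy
    rw [interior_Ici] at hy
    exact ((hasDerivAt_Sa α hα y (by simp at hy; linarith)).differentiableAt).differentiableWithinAt
  · intro y hy
    rw [interior_Ici] at hy
    have hy0 : 0 < y := by simp at hy; linarith
    rw [(hasDerivAt_Sa α hα y hy0).deriv]
    exact Sa_deriv_nonneg α hα y hy0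

lemma hasDerivAt_Ga (α c : ℝ) (hα : 1 ≤ α) (y : ℝ) :
    HasDerivAt (Ga α c) ((2*α+1) * Da α c y) y := by
  have h1 := hasDerivAt_Fa α hα y
  have h2 : HasDerivAt (fun y : ℝ => Fa α (y-1)) ((2*α+1) * ((y-1)^2)^α) y := by
    have := (hasDerivAt_Fa α hα (y-1)).comp y ((hasDerivAt_id y).sub_const 1)
    simpa [Function.comp_def] using this
  have h3 := hasDerivAt_sq_rpow α hα y
  have := (((h1.sub h2).const_mul (c^(2*α))).sub (h3.const_mul (2*α+1)))
  convert this using 1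
  · rfl
  · rfl
  · rfl
  unfold Da; ring

section core
variable (α c : ℝ) (hα : 1 ≤ α) (hc : 1 < c)
  (hceq : c ^ (2*α+1) = (2*α+1)*c + 2*α)

set_option linter.unusedSectionVars false
include hα hc hceq

lemma c_pow_Sa_y0 : c^(2*α) * Sa α (c/(c+1)) = 2*α := by
  have ha : (0:ℝ) < c + 1 := by linarith
  have hcp : (0:ℝ) < c := by linarith
  have h1 : c/(c+1) - 1 = -(1/(c+1)) := by field_simp; ring
  have h2 : ((c/(c+1) - 1)^2)^α = (1/(c+1))^(2*α) := by
    rw [h1, neg_sq, sq_rpow_pos (by positivity)]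
  have h3 : (c/(c+1))^(1-2*α) = c^(1-2*α) * (1/(c+1))^(1-2*α) := by
    rw [show c/(c+1) = c * (1/(c+1)) by ring, Real.mul_rpow hcp.le (by positivity)]
  have h4 : (1/(c+1))^(2*α) * (1/(c+1))^(1-2*α) = 1/(c+1) := by
    rw [← Real.rpow_add (by positivity)]; norm_num
  have h5 : c^(2*α) * c^(1-2*α) = c := by
    rw [← Real.rpow_add hcp]; norm_num
  have h6 : c^(2*α) * c = c^(2*α+1) := by
    nth_rewrite 2 [← Real.rpow_one c]
    rw [← Real.rpow_add hcp]
  unfold Sa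
  rw [h2, h3]
  have : c^(2*α) * (c/(c+1) - (1/(c+1))^(2*α) * (c^(1-2*α) * (1/(c+1))^(1-2*α)))
      = c^(2*α) * (c/(c+1)) - (c^(2*α) * c^(1-2*α)) * ((1/(c+1))^(2*α) * (1/(c+1))^(1-2*α)) := by
    ring
  rw [this, h4, h5]
  rw [show c^(2*α) * (c/(c+1)) = c^(2*α)*c / (c+1) by ring, h6, hceq]
  field_simp
  ring

lemma Da_eq (y : ℝ) (hy : 0 < y) :
    Da α c y = y^(2*α-1) * (c^(2*α) * Sa α y - 2*α) := by
  have e1 : (y^2)^α = y^(2*α) := sq_rpow_pos hy α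
  have e2 : (y^2)^(α-1) * y = y^(2*α-1) := by
    rw [sq_rpow_pos hy]
    nth_rewrite 2 [← Real.rpow_one y]
    rw [← Real.rpow_add hy]; ring_nf
  have e3 : y^(2*α-1) * y^(1-2*α) = 1 := by
    rw [← Real.rpow_add hy]; norm_num
  have e4 : y^(2*α-1) * y = y^(2*α) := by
    nth_rewrite 2 [← Real.rpow_one y]
    rw [← Real.rpow_add hy]; ring_nf
  unfold Da Sa
  rw [e1, e2]
  have : y^(2*α-1) * (c^(2*α) * (y - ((y-1)^2)^α * y^(1-2*α)) - 2*α)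
      = c^(2*α) * (y^(2*α-1)*y - ((y-1)^2)^α * (y^(2*α-1) * y^(1-2*α))) - 2*α*y^(2*α-1) := by
    ring
  rw [this, e3, e4]
  ring

lemma Ga_y0 : Ga α c (c/(c+1)) = 0 := by
  have ha : (0:ℝ) < c + 1 := by linarith
  have hcp : (0:ℝ) < c := by linarith
  have hb : (0:ℝ) < 1/(c+1) := by positivity
  have h1 : Fa α (c/(c+1)) = (1/(c+1))^(2*α+1) * c^(2*α+1) := by
    rw [show c/(c+1) = (1/(c+1)) * c by ring, Fa_scale α _ _ hb]
    congr 1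
    unfold Fa
    rw [sq_rpow_pos hcp, Real.rpow_add hcp, Real.rpow_one]
  have h2 : Fa α (c/(c+1) - 1) = -(1/(c+1))^(2*α+1) := by
    rw [show c/(c+1) - 1 = (1/(c+1)) * (-1) by field_simp; ring, Fa_scale α _ _ hb]
    have : Fa α (-1) = -1 := by unfold Fa; norm_num
    rw [this]; ring
  have h3 : ((c/(c+1))^2)^α = c^(2*α) * (1/(c+1))^(2*α) := by
    rw [show c/(c+1) = c * (1/(c+1)) by ring, sq_rpow_pos (by positivity),
      Real.mul_rpow hcp.le hb.le]
  have h4 : (1/(c+1))^(2*α+1) = (1/(c+1))^(2*α) * (1/(c+1)) := by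
    rw [Real.rpow_add hb, Real.rpow_one]
  unfold Ga
  rw [h1, h2, h3, h4, hceq]
  field_simp
  ring

lemma Ga_nonneg_right (y : ℝ) (hy : 1/2 ≤ y) : 0 ≤ Ga α c y := by
  set y₀ := c/(c+1) with hy₀
  have ha : (0:ℝ) < c + 1 := by linarith
  have hy₀halp : 1/2 ≤ y₀ := by rw [hy₀]; rw [div_le_div_iff₀ (by norm_num) ha]; linarith
  have hy₀lt : y₀ < 1 := by rw [hy₀, div_lt_one ha]; linarith
  have hSy₀ : c^(2*α) * Sa α y₀ = 2*α := c_pow_Sa_y0 α c hα hc hceq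
  have hGy₀ : Ga α c y₀ = 0 := Ga_y0 α c hα hc hceq
  have hdiff : ∀ z, DifferentiableAt ℝ (Ga α c) z :=
    fun z => (hasDerivAt_Ga α c hα z).differentiableAt
  rcases le_total y y₀ with hcase | hcase
  · -- antitone on Icc (1/2) y₀
    have hanti : AntitoneOn (Ga α c) (Icc (1/2) y₀) := by
      apply antitoneOn_of_deriv_nonpos (convex_Icc _ _)
        (fun z _ => (hdiff z).continuousAt.continuousWithinAt)
        (fun z _ => (hdiff z).differentiableWithinAt)
      intro z hz
      rw [interior_Icc] at hz
      have hz0 : (0:ℝ) < z := lt_trans (by norm_num) hz.1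
      rw [(hasDerivAt_Ga α c hα z).deriv]
      have hSz : Sa α z ≤ Sa α y₀ :=
        Sa_mono α hα (mem_Ici.mpr hz.1.le) (mem_Ici.mpr hy₀halp) hz.2.le
      have hDa : Da α c z ≤ 0 := by
        rw [Da_eq α c hα hc hceq z hz0]
        apply mul_nonpos_of_nonneg_of_nonpos (Real.rpow_nonneg hz0.le _)
        have : c^(2*α) * Sa α z ≤ 2*α := by
          calc c^(2*α) * Sa α z ≤ c^(2*α) * Sa α y₀ :=
            mul_le_mul_of_nonneg_left hSz (Real.rpow_nonneg (by linarith) _)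
          _ = 2*α := hSy₀
        linarith
      nlinarith
    have := hanti (mem_Icc.mpr ⟨hy, hcase⟩) (mem_Icc.mpr ⟨hy₀halp, le_refl _⟩) hcase
    rw [hGy₀] at this
    linarith
  · -- monotone on Ici y₀
    have hmono : MonotoneOn (Ga α c) (Ici y₀) := by
      apply monotoneOn_of_deriv_nonneg (convex_Ici _)
        (fun z _ => (hdiff z).continuousAt.continuousWithinAt)
        (fun z _ => (hdiff z).differentiableWithinAt)
      intro z hz
      rw [interior_Ici] at hz
      have hz0 : (0:ℝ) < z := lt_trans (lt_of_lt_of_le (by norm_num) hy₀halp) hz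
      rw [(hasDerivAt_Ga α c hα z).deriv]
      have hSz : Sa α y₀ ≤ Sa α z :=
        Sa_mono α hα (mem_Ici.mpr hy₀halp)
          (mem_Ici.mpr (hy₀halp.trans hz.le)) hz.le
      have hDa : 0 ≤ Da α c z := by
        rw [Da_eq α c hα hc hceq z hz0]
        apply mul_nonneg (Real.rpow_nonneg hz0.le _)
        have : 2*α ≤ c^(2*α) * Sa α z := by
          calc 2*α = c^(2*α) * Sa α y₀ := hSy₀.symm
          _ ≤ c^(2*α) * Sa α z :=
            mul_le_mul_of_nonneg_left hSz (Real.rpow_nonneg (by linarith) _)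
        linarith
      nlinarith
    have := hmono (mem_Ici.mpr (le_refl _)) (mem_Ici.mpr hcase) hcase
    rw [hGy₀] at this
    linarith

lemma CI (y : ℝ) : (2*α+1) * (y^2)^α ≤ c^(2*α) * (Fa α y - Fa α (y-1)) := by
  have key : ∀ z, 0 ≤ Ga α c z := by
    intro z
    rcases le_or_gt (1/2 : ℝ) z with h | h
    · exact Ga_nonneg_right α c hα hc hceq z h
    · have h1 : (1/2:ℝ) ≤ 1 - z := by linarith
      have h2 := Ga_nonneg_right α c hα hc hceq (1-z) h1
      unfold Ga at h2 ⊢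
      have e1 : Fa α (1-z) = - Fa α (z-1) := by
        rw [show (1-z : ℝ) = -(z-1) by ring, Fa_odd]
      have e2 : Fa α (1-z-1) = - Fa α z := by
        rw [show (1-z-1 : ℝ) = -z by ring, Fa_odd]
      rw [e1, e2] at h2
      have e3 : (z^2)^α ≤ ((1-z)^2)^α :=
        Real.rpow_le_rpow (sq_nonneg z) (by nlinarith) (by linarith)
      nlinarith [e3]
  have := key y
  unfold Ga at this
  linarith

end core

lemma rpow_succ {x : ℝ} (hx : 0 < x) (e : ℝ) : x^(e+1) = x^e * x := by
  rw [Real.rpow_add hx, Real.rpow_one]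
section core
set_option linter.unusedSectionVars false
variable (α c : ℝ) (hα : 1 ≤ α) (hc : 1 < c)
  (hceq : c ^ (2*α+1) = (2*α+1)*c + 2*α)
include hα hc hceq

lemma CI_scaled (x s : ℝ) (hs : 0 < s) :
    (2*α+1) * s * ((x+s)^2)^α ≤ c^(2*α) * (Fa α (x+s) - Fa α x) := by
  have h := CI α c hα hc hceq ((x+s)/s)
  have hsp : (0:ℝ) < s^(2*α+1) := Real.rpow_pos_of_pos hs _
  have h2 := mul_le_mul_of_nonneg_left h hsp.le
  have e0 : s * ((x+s)/s) = x + s := by field_simp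
  have e1 : s^(2*α+1) * ((2*α+1) * (((x+s)/s)^2)^α) = (2*α+1) * s * ((x+s)^2)^α := by
    have : s^(2*α+1) = s^(2*α) * s := by
      rw [Real.rpow_add hs, Real.rpow_one]
    rw [this]
    have : s^(2*α) * (((x+s)/s)^2)^α = ((x+s)^2)^α := by
      rw [← sq_rpow_pos hs, ← Real.mul_rpow (sq_nonneg s) (sq_nonneg _), ← mul_pow, e0]
    linear_combination (2*α+1) * s * this
  have e2 : s^(2*α+1) * (c^(2*α) * (Fa α ((x+s)/s) - Fa α ((x+s)/s - 1)))
      = c^(2*α) * (Fa α (x+s) - Fa α x) := by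
    have f1 : Fa α (x+s) = s^(2*α+1) * Fa α ((x+s)/s) := by
      rw [← Fa_scale α s _ hs, e0]
    have f2 : Fa α x = s^(2*α+1) * Fa α ((x+s)/s - 1) := by
      rw [← Fa_scale α s _ hs]
      congr 1
      field_simp
      ring
    rw [f1, f2]; ring
  rw [e1, e2] at h2
  exact h2

lemma core_ineq (x u : ℝ) (hu : 0 < u) (t : ℝ) (ht : t ∈ Ioc (0:ℝ) 1) :
    t^(c^(2*α)) * (Fa α (u+x) - Fa α x) ≤ Fa α (u*t+x) - Fa α x := by
  set K := c^(2*α) with hK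
  have hKpos : 0 < K := Real.rpow_pos_of_pos (by linarith) _
  set H : ℝ → ℝ := fun τ => (Fa α (u*τ+x) - Fa α x) * τ^(-K) with hH
  have hderiv : ∀ τ : ℝ, 0 < τ → HasDerivAt H
      (((2*α+1) * ((u*τ+x)^2)^α * u) * τ^(-K)
        + (Fa α (u*τ+x) - Fa α x) * (-K * τ^(-K-1))) τ := by
    intro τ hτ
    have h1 : HasDerivAt (fun τ : ℝ => Fa α (u*τ+x)) ((2*α+1) * ((u*τ+x)^2)^α * u) τ := by
      have hs : HasDerivAt (fun τ : ℝ => u*τ+x) u τ := by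
        simpa using ((hasDerivAt_id τ).const_mul u).add_const x
      exact (hasDerivAt_Fa α hα (u*τ+x)).comp τ hs
    have h2 : HasDerivAt (fun τ : ℝ => τ^(-K)) (-K * τ^(-K-1)) τ :=
      Real.hasDerivAt_rpow_const (Or.inl hτ.ne')
    exact (h1.sub_const (Fa α x)).mul h2
  have hderiv_nonpos : ∀ τ : ℝ, 0 < τ →
      ((2*α+1) * ((u*τ+x)^2)^α * u) * τ^(-K)
        + (Fa α (u*τ+x) - Fa α x) * (-K * τ^(-K-1)) ≤ 0 := by
    intro τ hτ
    have hs : 0 < u * τ := mul_pos hu hτ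
    have key := CI_scaled α c hα hc hceq x (u*τ) hs
    rw [show x + u*τ = u*τ+x by ring] at key
    have e1 : τ^(-K) = τ^(-K-1) * τ := by
      rw [← rpow_succ hτ (-K-1)]
      norm_num
    have hτp : (0:ℝ) < τ^(-K-1) := Real.rpow_pos_of_pos hτ _
    rw [e1]
    have : ((2*α+1) * ((u*τ+x)^2)^α * u) * (τ^(-K-1) * τ)
        + (Fa α (u*τ+x) - Fa α x) * (-K * τ^(-K-1))
        = τ^(-K-1) * ((2*α+1) * (u*τ) * ((u*τ+x)^2)^α - K * (Fa α (u*τ+x) - Fa α x)) := by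
      ring
    rw [this]
    apply mul_nonpos_of_nonneg_of_nonpos hτp.le
    linarith [key]
  have hanti : AntitoneOn H (Icc t 1) := by
    apply antitoneOn_of_deriv_nonpos (convex_Icc _ _)
    · intro τ hτ
      exact ((hderiv τ (lt_of_lt_of_le ht.1 hτ.1)).differentiableAt).continuousAt.continuousWithinAt
    · intro τ hτ
      rw [interior_Icc] at hτ
      exact ((hderiv τ (lt_trans ht.1 hτ.1)).differentiableAt).differentiableWithinAt
    · intro τ hτ
      rw [interior_Icc] at hτ
      have hτ0 : 0 < τ := lt_trans ht.1 hτ.1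
      rw [(hderiv τ hτ0).deriv]
      exact hderiv_nonpos τ hτ0
  have hmem1 : t ∈ Icc t 1 := mem_Icc.mpr ⟨le_refl _, ht.2⟩
  have hmem2 : (1:ℝ) ∈ Icc t 1 := mem_Icc.mpr ⟨ht.2, le_refl _⟩
  have hH1 : H 1 ≤ H t := hanti hmem1 hmem2 ht.2
  have e1 : H 1 = Fa α (u+x) - Fa α x := by
    simp [hH, Real.one_rpow]
  have e2 : H t = (Fa α (u*t+x) - Fa α x) * t^(-K) := rfl
  rw [e1, e2] at hH1
  have htK : (0:ℝ) < t^K := Real.rpow_pos_of_pos ht.1 _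
  have hinv : t^(-K) * t^K = 1 := by
    rw [← Real.rpow_add ht.1]; norm_num
  calc t^K * (Fa α (u+x) - Fa α x)
      ≤ t^K * ((Fa α (u*t+x) - Fa α x) * t^(-K)) := by
        exact mul_le_mul_of_nonneg_left hH1 htK.le
    _ = (Fa α (u*t+x) - Fa α x) * (t^(-K) * t^K) := by ring
    _ = Fa α (u*t+x) - Fa α x := by rw [hinv, mul_one]

end core

theorem stmt_10 (α : ℝ) (hα : 1 ≤ α) (x₀ u₀ : ℝ) (hu₀ : u₀ ≠ 0)
    (m : ℝ) (hm : m ∈ Ico (-3 : ℝ) (-2)) (hm0 : m ≠ 0)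
    (hmeq : ((m + 1) ^ 2) ^ α * (m + 1) = (2 * α + 1) * m + 1)
    (hm1 : α = 1 → m = -3)
    (hden : ((u₀ + x₀) ^ 2) ^ α * (u₀ + x₀) - (x₀ ^ 2) ^ α * x₀ ≠ 0) :
    ∀ t ∈ Ioc (0 : ℝ) 1,
      t * (((u₀ * t + x₀) ^ 2) ^ α * (u₀ * t + x₀) - (x₀ ^ 2) ^ α * x₀) /
          (((u₀ + x₀) ^ 2) ^ α * (u₀ + x₀) - (x₀ ^ 2) ^ α * x₀)
        ≥ t ^ (2 * ((α + 1) * m + 1) / (m + 1)) := by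
  intro t ht
  set c : ℝ := -(m+1) with hcdef
  have hc : 1 < c := by simp only [hcdef]; linarith [hm.2]
  have hm1ne : m + 1 ≠ 0 := by intro h; linarith [hm.2, h]
  have hcp : (0:ℝ) < c := by linarith
  have hsq : ((m+1)^2 : ℝ) = c^2 := by rw [hcdef]; ring
  have hKc : (((m+1)^2 : ℝ))^α = c^(2*α) := by rw [hsq, sq_rpow_pos hcp]
  have hc1 : c^(2*α) * c = c^(2*α+1) := by
    rw [Real.rpow_add hcp, Real.rpow_one]
  have hceq : c ^ (2*α+1) = (2*α+1)*c + 2*α := by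
    have h := hmeq
    rw [hKc] at h
    have : c^(2*α) * (m+1) = -(c^(2*α) * c) := by
      rw [hcdef]; ring_nf
    rw [this, hc1] at h
    have hmc : m = -1 - c := by rw [hcdef]; ring
    rw [hmc] at h
    linarith
  set K := c^(2*α) with hKdef
  have hKpos : 0 < K := Real.rpow_pos_of_pos hcp _
  have hN : 2 * ((α + 1) * m + 1) / (m + 1) = K + 1 := by
    have h : K = ((2*α+1)*m + 1)/(m+1) := by
      show c^(2*α) = _
      rw [eq_div_iff hm1ne]
      have h2 := hmeq
      rw [hsq, sq_rpow_pos hcp] at h2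
      linarith
    rw [h]
    field_simp
    ring
  have htN : t ^ (2 * ((α + 1) * m + 1) / (m + 1)) = t^K * t := by
    rw [hN, Real.rpow_add ht.1, Real.rpow_one]
  show t * (Fa α (u₀*t+x₀) - Fa α x₀) / (Fa α (u₀+x₀) - Fa α x₀) ≥ _
  rw [ge_iff_le, htN]
  rcases lt_or_gt_of_ne hu₀ with hneg | hpos
  · -- u₀ < 0
    have hcore := core_ineq α c hα hc hceq (-x₀) (-u₀) (by linarith) t ht
    have e1 : Fa α (-u₀ + -x₀) = -(Fa α (u₀+x₀)) := by
      rw [show -u₀ + -x₀ = -(u₀+x₀) by ring, Fa_odd]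
    have e2 : Fa α (-u₀*t + -x₀) = -(Fa α (u₀*t+x₀)) := by
      rw [show -u₀*t + -x₀ = -(u₀*t+x₀) by ring, Fa_odd]
    have e3 : Fa α (-x₀) = -(Fa α x₀) := Fa_odd α x₀
    rw [e1, e2, e3] at hcore
    have hdlt : Fa α (u₀+x₀) - Fa α x₀ < 0 := by
      rcases lt_or_eq_of_le (Fa_mono α hα (by linarith : u₀ + x₀ ≤ x₀)) with h | h
      · linarith
      · exfalso; apply hden; show Fa α (u₀+x₀) - Fa α x₀ = 0; linarith
    have hcore' : Fa α (u₀*t+x₀) - Fa α x₀ ≤ t^K * (Fa α (u₀+x₀) - Fa α x₀) := by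
      nlinarith [hcore]
    rw [le_div_iff_of_neg hdlt]
    nlinarith [ht.1, hcore', hdlt]
  · -- u₀ > 0
    have hcore := core_ineq α c hα hc hceq x₀ u₀ hpos t ht
    have hdpos : 0 < Fa α (u₀+x₀) - Fa α x₀ := by
      rcases lt_or_eq_of_le (Fa_mono α hα (by linarith : x₀ ≤ u₀ + x₀)) with h | h
      · linarith
      · exfalso; apply hden; show Fa α (u₀+x₀) - Fa α x₀ = 0; linarith
    rw [le_div_iff₀ hdpos]
    nlinarith [ht.1, hcore, hdpos]
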